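/- Let α be a finite type, let η ∈ (0, 1] with 6·η² ≤ 1, let k be a positive natural number, let D_C, D₁, …, D_k be distributions on α, let q₁, …, q_k ∈ [0, 1] with ∑ i, q i = 1, and set r = ∑ i, q i * f(d_H(D_C, D i)) where f(x) = (1/2)·(1 + (1 − x²)²). Let N be a natural number with 2 * Real.exp (−η^4 * N / 2) < 2/3, and let μ be the product measure on Fin N → Bool of N copies of the Bernoulli measure on Bool with probability r of true. If μ {ω | ((Finset.univ.filter (fun i => ω i = true)).card : ℝ) / N ≥ 1 − 2·η²} ≥ 2/3, then d_H(∑ i, q i • D i, D_C) ≤ 12 * η^(1/4). (Probabilistic core of the soundness of Theorem 4.7 for provers sending mixed states: if a prover sending in every round the mixed state ρ_A = ∑ q_i |ψ_{D_i}⟩⟨ψ_{D_i}| passes the verifier's test with probability at least 2/3, then the sampling distribution ∑ q_i D_i is O(η^{1/4})-close to D_C in Hellinger distance.) -/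
import Mathlib


open MeasureTheory

/-- The Hellinger distance between two distributions on a finite type:
`d_H(P,Q) = (1/√2)·√(∑ x, (√(P x) − √(Q x))²)`. -/
noncomputable def hellingerDist {α : Type*} [Fintype α] (P Q : α → ℝ) : ℝ :=
  (1 / Real.sqrt 2) * Real.sqrt (∑ x, (Real.sqrt (P x) - Real.sqrt (Q x)) ^ 2)

/-- The Bernoulli measure on `Bool` with probability `p` of `true`. -/
noncomputable def bernoulliMeasure (p : ℝ) : Measure Bool :=
  ENNReal.ofReal p • Measure.dirac true + ENNReal.ofReal (1 - p) • Measure.dirac false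

instance (p : ℝ) : IsFiniteMeasure (bernoulliMeasure p) := by
  constructor
  simp only [bernoulliMeasure, Measure.add_apply, Measure.smul_apply, smul_eq_mul,
    measure_univ, mul_one]
  exact ENNReal.add_lt_top.mpr ⟨ENNReal.ofReal_lt_top, ENNReal.ofReal_lt_top⟩

open scoped ENNReal

lemma sum_prod_pi_aux {N : ℕ} (g : Fin N → Bool → ℝ) :
    ∑ ω : Fin N → Bool, ∏ k, g k (ω k) = ∏ k, ∑ b, g k b := by
  classical
  rw [Finset.prod_univ_sum, Fintype.piFinset_univ]

lemma var_calc_aux {N : ℕ} (p c : Bool → ℝ) (h1 : p true + p false = 1)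
    (h0 : c true * p true + c false * p false = 0) :
    ∑ ω : Fin N → Bool, (∏ i, p (ω i)) * (∑ i, c (ω i)) ^ 2
      = (N : ℝ) * (c true ^ 2 * p true + c false ^ 2 * p false) := by
  classical
  have key : ∀ ω : Fin N → Bool, (∏ i, p (ω i)) * (∑ i, c (ω i)) ^ 2
      = ∑ i, ∑ j, ∏ k, ((if k = i then c (ω k) else 1) * (if k = j then c (ω k) else 1)
          * p (ω k)) := by
    intro ω
    rw [sq, Finset.sum_mul_sum, Finset.mul_sum]
    refine Finset.sum_congr rfl fun i _ => ?_
    rw [Finset.mul_sum]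
    refine Finset.sum_congr rfl fun j _ => ?_
    have h1 : (∏ k, (if k = i then c (ω k) else 1)) = c (ω i) := by
      simp [Finset.prod_ite_eq']
    have h2 : (∏ k, (if k = j then c (ω k) else 1)) = c (ω j) := by
      simp [Finset.prod_ite_eq']
    rw [Finset.prod_mul_distrib, Finset.prod_mul_distrib, h1, h2]
    ring
  rw [Finset.sum_congr rfl fun ω _ => key ω]
  rw [Finset.sum_comm]
  have swap : ∀ i : Fin N, ∑ ω : Fin N → Bool, ∑ j, ∏ k,
      ((if k = i then c (ω k) else 1) * (if k = j then c (ω k) else 1) * p (ω k))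
      = ∑ j, ∑ ω : Fin N → Bool, ∏ k,
      ((if k = i then c (ω k) else 1) * (if k = j then c (ω k) else 1) * p (ω k)) :=
    fun i => Finset.sum_comm
  rw [Finset.sum_congr rfl fun i _ => swap i]
  have eval : ∀ i j : Fin N,
      (∑ ω : Fin N → Bool, ∏ k, ((if k = i then c (ω k) else 1) *
        (if k = j then c (ω k) else 1) * p (ω k)))
      = if i = j then c true ^ 2 * p true + c false ^ 2 * p false else 0 := by
    intro i j
    rw [sum_prod_pi_aux (fun k b => (if k = i then c b else 1) * (if k = j then c b else 1) * p b)]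
    by_cases hij : i = j
    · subst hij
      rw [if_pos rfl, Finset.prod_eq_single i]
      · simp only [if_pos rfl, if_true, Fintype.sum_bool]; ring
      · intro k _ hk
        simp only [if_neg hk, if_true, Fintype.sum_bool, one_mul]
        linarith
      · simp
    · rw [if_neg hij, Finset.prod_eq_zero (Finset.mem_univ i)]
      simp only [if_pos rfl, if_true, if_neg hij, Fintype.sum_bool, mul_one]
      linarith
  rw [Finset.sum_congr rfl fun i _ => Finset.sum_congr rfl fun j _ => eval i j]
  simp [Finset.sum_ite_eq, mul_add]

lemma bern_single_aux {N : ℕ} {r : ℝ} (hr0 : 0 ≤ r) (hr1 : r ≤ 1) (ω : Fin N → Bool) :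
    (Measure.pi fun _ : Fin N => bernoulliMeasure r) {ω}
      = ENNReal.ofReal (∏ i, if ω i then r else 1 - r) := by
  rw [← Set.univ_pi_singleton, Measure.pi_pi,
    ENNReal.ofReal_prod_of_nonneg (fun i _ => by split_ifs <;> linarith)]
  refine Finset.prod_congr rfl fun i _ => ?_
  cases h : ω i <;> simp [bernoulliMeasure, h, Measure.dirac_apply]

open scoped Classical in
lemma bern_measure_le_aux {N : ℕ} {r : ℝ} (hr0 : 0 ≤ r) (hr1 : r ≤ 1)
    (A : Set (Fin N → Bool)) :
    (Measure.pi fun _ : Fin N => bernoulliMeasure r) A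
      ≤ ENNReal.ofReal (∑ ω ∈ Finset.univ.filter (· ∈ A), ∏ i, if ω i then r else 1 - r) := by
  classical
  have hsub : A ⊆ ⋃ ω ∈ Finset.univ.filter (· ∈ A), {ω} := by
    intro x hx
    exact Set.mem_biUnion (Finset.mem_filter.mpr ⟨Finset.mem_univ x, hx⟩) rfl
  calc (Measure.pi fun _ : Fin N => bernoulliMeasure r) A
      ≤ (Measure.pi fun _ : Fin N => bernoulliMeasure r)
          (⋃ ω ∈ Finset.univ.filter (· ∈ A), {ω}) := measure_mono hsub
    _ ≤ ∑ ω ∈ Finset.univ.filter (· ∈ A),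
          (Measure.pi fun _ : Fin N => bernoulliMeasure r) {ω} := measure_biUnion_finset_le _ _
    _ = _ := by
        rw [ENNReal.ofReal_sum_of_nonneg (fun ω _ => Finset.prod_nonneg
          (fun i _ => by split_ifs <;> linarith))]
        exact Finset.sum_congr rfl fun ω _ => bern_single_aux hr0 hr1 ω

open scoped Classical in
lemma r_lower_aux {N : ℕ} {r η : ℝ} (hη0 : 0 < η) (hr0 : 0 ≤ r) (hr1 : r ≤ 1)
    (hN : 2 * Real.exp (-η ^ 4 * N / 2) < 2 / 3)
    (h : (Measure.pi fun _ : Fin N => bernoulliMeasure r)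
        {ω | ((Finset.univ.filter fun i => ω i = true).card : ℝ) / N ≥ 1 - 2 * η ^ 2} ≥ 2 / 3) :
    1 - 3 * η ^ 2 ≤ r := by
  by_contra hcon
  push_neg at hcon
  have hexp1 : Real.exp (-η ^ 4 * N / 2) < 1 / 3 := by linarith
  have h3 : Real.exp 1 < 3 := by linarith [Real.exp_one_lt_d9]
  have h13 : (1 : ℝ) / 3 < Real.exp (-1) := by
    rw [Real.exp_neg, ← one_div]
    exact one_div_lt_one_div_of_lt (Real.exp_pos 1) h3
  have hlt : -η ^ 4 * N / 2 < -1 := Real.exp_lt_exp.mp (hexp1.trans h13)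
  have h2N : 2 < η ^ 4 * N := by linarith
  have hN0 : 0 < (N : ℝ) := by nlinarith [pow_pos hη0 4]
  set A : Set (Fin N → Bool) :=
    {ω | ((Finset.univ.filter fun i => ω i = true).card : ℝ) / N ≥ 1 - 2 * η ^ 2} with hA
  set p : Bool → ℝ := fun b => if b then r else 1 - r with hpdef
  set c : Bool → ℝ := fun b => (if b then (1 : ℝ) else 0) - r with hcdef
  have hw : ∀ ω : Fin N → Bool, 0 ≤ ∏ i, p (ω i) :=
    fun ω => Finset.prod_nonneg fun i _ => by simp only [hpdef]; split_ifs <;> linarith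
  have hS : ∀ ω : Fin N → Bool, ∑ i, c (ω i)
      = ((Finset.univ.filter fun i => ω i = true).card : ℝ) - N * r := by
    intro ω
    simp only [hcdef]
    rw [Finset.sum_sub_distrib, Finset.sum_const, Finset.card_univ, Fintype.card_fin,
      nsmul_eq_mul]
    congr 1
    rw [Finset.card_filter]
    push_cast
    refine Finset.sum_congr rfl fun i _ => ?_
    by_cases hb : ω i <;> simp [hb]
  have hev : ∀ ω ∈ Finset.univ.filter (· ∈ A), ((N : ℝ) * η ^ 2) ^ 2 * ∏ i, p (ω i)
      ≤ (∏ i, p (ω i)) * (∑ i, c (ω i)) ^ 2 := by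
    intro ω hω
    have hA' : ((Finset.univ.filter fun i => ω i = true).card : ℝ) / N ≥ 1 - 2 * η ^ 2 :=
      (Finset.mem_filter.mp hω).2
    have hcard : (1 - 2 * η ^ 2) * N ≤ ((Finset.univ.filter fun i => ω i = true).card : ℝ) := by
      rw [ge_iff_le, le_div_iff₀ hN0] at hA'
      exact hA'
    have hgap : (N : ℝ) * η ^ 2 ≤ ∑ i, c (ω i) := by
      rw [hS ω]; nlinarith
    have h0 : 0 ≤ (N : ℝ) * η ^ 2 := by positivity
    calc ((N : ℝ) * η ^ 2) ^ 2 * ∏ i, p (ω i)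
        ≤ (∑ i, c (ω i)) ^ 2 * ∏ i, p (ω i) :=
          mul_le_mul_of_nonneg_right (pow_le_pow_left₀ h0 hgap 2) (hw ω)
      _ = _ := by ring
  have hvar : ∑ ω : Fin N → Bool, (∏ i, p (ω i)) * (∑ i, c (ω i)) ^ 2
      = (N : ℝ) * (r * (1 - r)) := by
    rw [var_calc_aux p c (by simp only [hpdef]; norm_num)
      (by simp only [hcdef, hpdef]; norm_num; ring)]
    congr 1
    simp only [hpdef, hcdef]
    norm_num
    ring
  have hsum : ((N : ℝ) * η ^ 2) ^ 2 * ∑ ω ∈ Finset.univ.filter (· ∈ A), ∏ i, p (ω i)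
      ≤ (N : ℝ) * (r * (1 - r)) := by
    rw [Finset.mul_sum]
    calc ∑ ω ∈ Finset.univ.filter (· ∈ A), ((N : ℝ) * η ^ 2) ^ 2 * ∏ i, p (ω i)
        ≤ ∑ ω ∈ Finset.univ.filter (· ∈ A), (∏ i, p (ω i)) * (∑ i, c (ω i)) ^ 2 :=
          Finset.sum_le_sum hev
      _ ≤ ∑ ω : Fin N → Bool, (∏ i, p (ω i)) * (∑ i, c (ω i)) ^ 2 :=
          Finset.sum_le_sum_of_subset_of_nonneg (Finset.filter_subset _ _)
            (fun ω _ _ => mul_nonneg (hw ω) (sq_nonneg _))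
      _ = _ := hvar
  have hT0 : 0 ≤ ∑ ω ∈ Finset.univ.filter (· ∈ A), ∏ i, p (ω i) :=
    Finset.sum_nonneg fun ω _ => hw ω
  have hr14 : r * (1 - r) ≤ 1 / 4 := by nlinarith [sq_nonneg (r - 1 / 2)]
  have hfil : ∑ ω ∈ Finset.univ.filter (· ∈ A), ∏ i, p (ω i) ≤ 1 / 8 := by
    have e1 : ((N : ℝ) * η ^ 2) ^ 2 = (N : ℝ) * (η ^ 4 * N) := by ring
    rw [e1, mul_assoc] at hsum
    have step : (η ^ 4 * N) * ∑ ω ∈ Finset.univ.filter (· ∈ A), ∏ i, p (ω i) ≤ r * (1 - r) :=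
      le_of_mul_le_mul_left hsum hN0
    nlinarith
  have hle := (bern_measure_le_aux hr0 hr1 A).trans (ENNReal.ofReal_le_ofReal hfil)
  have hfin : (2 / 3 : ℝ≥0∞) ≤ ENNReal.ofReal (1 / 8) := le_trans h hle
  have := ENNReal.toReal_mono (by simp) hfin
  rw [ENNReal.toReal_ofReal (by norm_num)] at this
  norm_num [ENNReal.toReal_div] at this

lemma hellingerDist_nonneg_aux {α : Type*} [Fintype α] (P Q : α → ℝ) :
    0 ≤ hellingerDist P Q :=
  mul_nonneg (by positivity) (Real.sqrt_nonneg _)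

lemma hellingerDist_sq_aux {α : Type*} [Fintype α] (P Q : α → ℝ)
    (hP0 : ∀ x, 0 ≤ P x) (hQ0 : ∀ x, 0 ≤ Q x) (hP1 : ∑ x, P x = 1) (hQ1 : ∑ x, Q x = 1) :
    hellingerDist P Q ^ 2 = 1 - ∑ x, Real.sqrt (P x) * Real.sqrt (Q x) := by
  unfold hellingerDist
  rw [mul_pow, Real.sq_sqrt (Finset.sum_nonneg fun x _ => sq_nonneg _), div_pow, one_pow,
    Real.sq_sqrt (by norm_num : (0:ℝ) ≤ 2)]
  have : ∀ x : α, (Real.sqrt (P x) - Real.sqrt (Q x)) ^ 2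
      = P x + Q x - 2 * (Real.sqrt (P x) * Real.sqrt (Q x)) := fun x => by
    rw [sub_sq, Real.sq_sqrt (hP0 x), Real.sq_sqrt (hQ0 x)]; ring
  rw [Finset.sum_congr rfl fun x _ => this x]
  rw [Finset.sum_sub_distrib, Finset.sum_add_distrib, hP1, hQ1, ← Finset.mul_sum]
  ring

/-- Probabilistic core of the soundness of Theorem 4.7 for provers sending
mixed states: if a prover sending in every round the mixed state
`ρ_A = ∑ q_i |ψ_{D_i}⟩⟨ψ_{D_i}|` passes the verifier's test (empirical mean of
Bernoulli trials with success probability `r = ∑ i, q i · f(d_H(D_C, D i))` at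
least `1 − 2η²`) with probability at least `2/3`, then the sampling
distribution `∑ q_i • D_i` is `12·η^(1/4)`-close to `D_C` in Hellinger
distance. -/
theorem mixed_state_soundness_probabilistic_core {α : Type*} [Fintype α]
    (η : ℝ) (hη : η ∈ Set.Ioc (0 : ℝ) 1) (hη2 : 6 * η ^ 2 ≤ 1)
    (k : ℕ) (hk : 0 < k)
    (DC : α → ℝ) (D : Fin k → α → ℝ) (q : Fin k → ℝ)
    (hDC0 : ∀ x, 0 ≤ DC x) (hDC1 : ∑ x, DC x = 1)
    (hD0 : ∀ i x, 0 ≤ D i x) (hD1 : ∀ i, ∑ x, D i x = 1)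
    (hq : ∀ i, q i ∈ Set.Icc (0 : ℝ) 1) (hq1 : ∑ i, q i = 1)
    (r : ℝ)
    (hr : r = ∑ i, q i * ((1 / 2) * (1 + (1 - hellingerDist DC (D i) ^ 2) ^ 2)))
    (N : ℕ) (hN : 2 * Real.exp (-η ^ 4 * N / 2) < 2 / 3)
    (h : (Measure.pi fun _ : Fin N => bernoulliMeasure r)
        {ω | ((Finset.univ.filter fun i => ω i = true).card : ℝ) / N ≥
          1 - 2 * η ^ 2} ≥ 2 / 3) :
    hellingerDist (fun x => ∑ i, q i * D i x) DC ≤ 12 * η ^ ((1 : ℝ) / 4) := by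
  obtain ⟨hη0, hη1⟩ := hη
  set B : Fin k → ℝ := fun i => ∑ x, Real.sqrt (DC x) * Real.sqrt (D i x) with hBdef
  have hB : ∀ i, hellingerDist DC (D i) ^ 2 = 1 - B i := fun i =>
    hellingerDist_sq_aux DC (D i) hDC0 (hD0 i) hDC1 (hD1 i)
  have hB0 : ∀ i, 0 ≤ B i := fun i =>
    Finset.sum_nonneg fun x _ => mul_nonneg (Real.sqrt_nonneg _) (Real.sqrt_nonneg _)
  have hB1 : ∀ i, B i ≤ 1 := fun i => by
    have := sq_nonneg (hellingerDist DC (D i))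
    have h2 := hB i
    linarith
  have hfr : r = ∑ i, q i * ((1 / 2) * (1 + (B i) ^ 2)) := by
    rw [hr]
    refine Finset.sum_congr rfl fun i _ => ?_
    rw [hB i]
    ring_nf
  have expand : ∑ i, q i * ((1 / 2) * (1 + (B i) ^ 2))
      = (1 / 2) * ((∑ i, q i) + ∑ i, q i * B i ^ 2) := by
    rw [mul_add, Finset.mul_sum, Finset.mul_sum, ← Finset.sum_add_distrib]
    exact Finset.sum_congr rfl fun i _ => by ring
  -- bounds on r
  have hqB2 : ∀ i, 0 ≤ q i * B i ^ 2 := fun i => mul_nonneg (hq i).1 (sq_nonneg _)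
  have hr0 : 0 ≤ r := by
    rw [hfr]
    exact Finset.sum_nonneg fun i _ => mul_nonneg (hq i).1 (by positivity)
  have hr1 : r ≤ 1 := by
    have hb : ∑ i, q i * ((1 / 2) * (1 + (B i) ^ 2)) ≤ ∑ i, q i :=
      Finset.sum_le_sum fun i _ => by
        have hb1 : B i ^ 2 ≤ 1 := by nlinarith [hB0 i, hB1 i]
        nlinarith [(hq i).1, mul_nonneg (hq i).1 (sub_nonneg.mpr hb1)]
    rw [hfr]
    linarith [hq1, hb]
  have hrge : 1 - 3 * η ^ 2 ≤ r := r_lower_aux hη0 hr0 hr1 hN h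
  -- ∑ q B ≥ 1 - 6η²
  have hsumB2 : 1 - 6 * η ^ 2 ≤ ∑ i, q i * B i ^ 2 := by
    rw [hfr, expand, hq1] at hrge
    linarith
  have hsumB : 1 - 6 * η ^ 2 ≤ ∑ i, q i * B i := by
    refine le_trans hsumB2 (Finset.sum_le_sum fun i _ => ?_)
    have h1 := hB0 i
    have h2 := hB1 i
    have hsq : B i ^ 2 ≤ B i := by nlinarith
    exact mul_le_mul_of_nonneg_left hsq (hq i).1
  -- the mixture
  set M : α → ℝ := fun x => ∑ i, q i * D i x with hMdef
  have hM0 : ∀ x, 0 ≤ M x := fun x =>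
    Finset.sum_nonneg fun i _ => mul_nonneg (hq i).1 (hD0 i x)
  have hM1 : ∑ x, M x = 1 := by
    simp only [hMdef]
    rw [Finset.sum_comm]
    rw [Finset.sum_congr rfl fun i _ => by rw [← Finset.mul_sum, hD1 i, mul_one]]
    exact hq1
  -- Cauchy-Schwarz pointwise
  have hcs : ∀ x, ∑ i, q i * Real.sqrt (D i x) ≤ Real.sqrt (M x) := by
    intro x
    rw [Real.le_sqrt (Finset.sum_nonneg fun i _ =>
      mul_nonneg (hq i).1 (Real.sqrt_nonneg _))]
    have cs := Finset.sum_mul_sq_le_sq_mul_sq Finset.univ (fun i => Real.sqrt (q i))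
      (fun i => Real.sqrt (q i) * Real.sqrt (D i x))
    have e1 : ∀ i : Fin k, Real.sqrt (q i) * (Real.sqrt (q i) * Real.sqrt (D i x))
        = q i * Real.sqrt (D i x) := fun i => by
      rw [← mul_assoc, Real.mul_self_sqrt (hq i).1]
    have e2 : ∀ i : Fin k, Real.sqrt (q i) ^ 2 = q i := fun i => Real.sq_sqrt (hq i).1
    have e3 : ∀ i : Fin k, (Real.sqrt (q i) * Real.sqrt (D i x)) ^ 2 = q i * D i x := fun i => by
      rw [mul_pow, Real.sq_sqrt (hq i).1, Real.sq_sqrt (hD0 i x)]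
    rw [Finset.sum_congr rfl fun i _ => e1 i, Finset.sum_congr rfl fun i _ => e2 i,
      Finset.sum_congr rfl fun i _ => e3 i, hq1, one_mul] at cs
    exact cs
    exact hM0 x
  -- lower bound on Bhattacharyya coefficient of the mixture
  have hBmix : ∑ i, q i * B i ≤ ∑ x, Real.sqrt (M x) * Real.sqrt (DC x) := by
    have step1 : ∑ x, (∑ i, q i * Real.sqrt (D i x)) * Real.sqrt (DC x)
        ≤ ∑ x, Real.sqrt (M x) * Real.sqrt (DC x) :=
      Finset.sum_le_sum fun x _ =>
        mul_le_mul_of_nonneg_right (hcs x) (Real.sqrt_nonneg _)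
    refine le_trans (le_of_eq ?_) step1
    rw [Finset.sum_congr rfl fun x (_ : x ∈ Finset.univ) => Finset.sum_mul
      (Finset.univ) (fun i => q i * Real.sqrt (D i x)) (Real.sqrt (DC x))]
    rw [Finset.sum_comm]
    refine Finset.sum_congr rfl fun i _ => ?_
    simp only [hBdef]
    rw [Finset.mul_sum]
    exact Finset.sum_congr rfl fun x _ => by ring
  -- conclude
  have hd2 : hellingerDist M DC ^ 2 ≤ 6 * η ^ 2 := by
    rw [hellingerDist_sq_aux M DC hM0 hDC0 hM1 hDC1]
    linarith
  have hd0 : 0 ≤ hellingerDist M DC := hellingerDist_nonneg_aux M DC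
  have hd3 : hellingerDist M DC ≤ 3 * η := by
    nlinarith [sq_nonneg (hellingerDist M DC - 3 * η), sq_nonneg (hellingerDist M DC + 3 * η),
      sq_nonneg η]
  have hrpow : η ≤ η ^ ((1 : ℝ) / 4) := by
    have := Real.rpow_le_rpow_of_exponent_ge hη0 hη1 (by norm_num : (1 : ℝ) / 4 ≤ 1)
    rwa [Real.rpow_one] at this
  have hrpow0 : 0 ≤ η ^ ((1 : ℝ) / 4) := Real.rpow_nonneg hη0.le _
  calc hellingerDist M DC ≤ 3 * η := hd3
    _ ≤ 3 * η ^ ((1 : ℝ) / 4) := by linarith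
    _ ≤ 12 * η ^ ((1 : ℝ) / 4) := by linarith
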